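/- Fix h₀ ∈ ℝ with h₀ ≠ 0 and h₀ ≠ −1, and set c = h₀² + 2h₀. For h ≠ h₀ near h₀ define x(h) = (c − h)(h + 1)/(c − 2h − h²)² and y(h) = (c − 2h − h²)²(c − h − h²)/(c − h)². Then Q(x(h), y(h)) tends to the finite limit −u(h₀² + h₀, h₀) as h tends to h₀ (within the punctured neighborhood where the formulas are defined), even though (x(h), y(h)) tends to infinity. -/

import Mathlib

open Filter

/-- `t = xy − 1`. -/
noncomputable def tF (x y : ℝ) : ℝ := x * y - 1

/-- `h = t(xt + 1)`. -/
noncomputable def hF (x y : ℝ) : ℝ := tF x y * (x * tF x y + 1)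

/-- `f = (xt + 1)²(t² + y)`. -/
noncomputable def fF (x y : ℝ) : ℝ := (x * tF x y + 1) ^ 2 * (tF x y ^ 2 + y)

/-- The auxiliary polynomial `u(f,h)`. -/
noncomputable def uF (f h : ℝ) : ℝ :=
  170 * f * h + 91 * h ^ 2 + 195 * f * h ^ 2 + 69 * h ^ 3 + 75 * f * h ^ 3 + (75 / 4) * h ^ 4

/-- `Q = −t² − 6th(h + 1) − u(f,h)`. -/
noncomputable def QF (x y : ℝ) : ℝ :=
  -tF x y ^ 2 - 6 * tF x y * hF x y * (hF x y + 1) - uF (fF x y) (hF x y)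

lemma QF_eval (c h : ℝ) (hd : c - 2*h - h^2 ≠ 0) (he : c - h ≠ 0) :
    QF ((c - h) * (h + 1) / (c - 2 * h - h ^ 2) ^ 2)
      ((c - 2 * h - h ^ 2) ^ 2 * (c - h - h ^ 2) / (c - h) ^ 2)
    = -(h*(c-2*h-h^2)/(c-h))^2 - 6*(h*(c-2*h-h^2)/(c-h))*h*(h+1) - uF (c-h) h := by
  set x := (c - h) * (h + 1) / (c - 2 * h - h ^ 2) ^ 2 with hx
  set y := (c - 2 * h - h ^ 2) ^ 2 * (c - h - h ^ 2) / (c - h) ^ 2 with hy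
  have ht : tF x y = h * (c-2*h-h^2) / (c-h) := by
    rw [tF, hx, hy]; rw [div_mul_div_comm, div_sub_one (by positivity), div_eq_div_iff (by positivity) he]; ring
  have hxt : x * tF x y + 1 = (c-h) / (c-2*h-h^2) := by
    rw [ht, hx]; rw [div_mul_div_comm, div_add_one (by positivity), div_eq_div_iff (by positivity) hd]; ring
  have hh : hF x y = h := by
    rw [hF, hxt, ht]; rw [div_mul_div_comm, div_eq_iff (mul_ne_zero he hd)]; ring
  have hf : fF x y = c - h := by
    rw [fF, hxt, ht, hy]; rw [div_pow, div_pow, ← add_div, div_mul_div_comm, div_eq_iff (by positivity)]; ring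
  rw [QF, hh, hf, ht]

/-- As `h → h₀` along the level curve `P = h₀² + 2h₀` (for `h₀ ≠ 0, −1`), the
point `(x(h), y(h))` tends to infinity, yet `Q(x(h), y(h))` tends to the finite
limit `−u(h₀² + h₀, h₀)`. -/
theorem pinchuk_Q_finite_limit (h₀ : ℝ) (h0 : h₀ ≠ 0) (h1 : h₀ ≠ -1) (c : ℝ)
    (hc : c = h₀ ^ 2 + 2 * h₀) :
    Tendsto
      (fun h : ℝ =>
        QF ((c - h) * (h + 1) / (c - 2 * h - h ^ 2) ^ 2)
          ((c - 2 * h - h ^ 2) ^ 2 * (c - h - h ^ 2) / (c - h) ^ 2))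
      (nhdsWithin h₀ {h₀}ᶜ) (nhds (-uF (h₀ ^ 2 + h₀) h₀)) ∧
    Tendsto
      (fun h : ℝ =>
        ‖(((c - h) * (h + 1) / (c - 2 * h - h ^ 2) ^ 2),
          ((c - 2 * h - h ^ 2) ^ 2 * (c - h - h ^ 2) / (c - h) ^ 2))‖)
      (nhdsWithin h₀ {h₀}ᶜ) atTop := by
  have h1' : h₀ + 1 ≠ 0 := fun H => h1 (by linarith)
  have he0 : c - h₀ ≠ 0 := by
    rw [hc]; intro H
    have : h₀ * (h₀ + 1) = 0 := by ring_nf; nlinarith [H]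
    rcases mul_eq_zero.1 this with h | h
    · exact h0 h
    · exact h1' h
  -- eventually, denominators are nonzero
  have hd0 : ∀ h : ℝ, c - 2*h - h^2 = -((h - h₀) * (h + h₀ + 2)) := by
    intro h; rw [hc]; ring
  have hevd : ∀ᶠ h in nhdsWithin h₀ {h₀}ᶜ, c - 2*h - h^2 ≠ 0 := by
    have h2 : ∀ᶠ h in nhds h₀, h + h₀ + 2 ≠ 0 := by
      have : ContinuousAt (fun h : ℝ => h + h₀ + 2) h₀ := by fun_prop
      exact this.eventually_ne (by intro H; apply h1; linarith)
    filter_upwards [eventually_nhdsWithin_of_eventually_nhds h2,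
      self_mem_nhdsWithin] with h hh2 hne
    rw [hd0 h]
    simp only [Set.mem_compl_iff, Set.mem_singleton_iff] at hne
    intro H
    rcases mul_eq_zero.1 (by linarith [H] : (h - h₀) * (h + h₀ + 2) = 0) with h' | h'
    · exact hne (by linarith)
    · exact hh2 h'
  have heve : ∀ᶠ h in nhdsWithin h₀ {h₀}ᶜ, c - h ≠ 0 := by
    have : ContinuousAt (fun h : ℝ => c - h) h₀ := by fun_prop
    exact eventually_nhdsWithin_of_eventually_nhds (this.eventually_ne he0)
  constructor
  · -- limit of QF
    set g : ℝ → ℝ := fun h =>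
      -(h*(c-2*h-h^2)/(c-h))^2 - 6*(h*(c-2*h-h^2)/(c-h))*h*(h+1) - uF (c-h) h with hg
    have hcg : ContinuousAt g h₀ := by
      rw [hg]
      have hq : ContinuousAt (fun h : ℝ => h*(c-2*h-h^2)/(c-h)) h₀ :=
        ContinuousAt.div (by fun_prop) (by fun_prop) he0
      unfold uF
      fun_prop (disch := exact he0)
    have hval : g h₀ = -uF (h₀ ^ 2 + h₀) h₀ := by
      have hz : c - 2*h₀ - h₀^2 = 0 := by rw [hc]; ring
      have hce : c - h₀ = h₀^2 + h₀ := by rw [hc]; ring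
      rw [hg]; simp only [hz, hce]; simp
    have : Tendsto g (nhdsWithin h₀ {h₀}ᶜ) (nhds (-uF (h₀ ^ 2 + h₀) h₀)) := by
      rw [← hval]
      exact hcg.tendsto.mono_left (nhdsWithin_le_nhds (s := {h₀}ᶜ))
    refine this.congr' ?_
    filter_upwards [hevd, heve] with h hd he
    exact (QF_eval c h hd he).symm
  · -- norm tends to infinity
    have f1 : Tendsto (fun h : ℝ => |(c - h) * (h + 1)|) (nhdsWithin h₀ {h₀}ᶜ)
        (nhds |(c - h₀) * (h₀ + 1)|) := by
      have : ContinuousAt (fun h : ℝ => |(c - h) * (h + 1)|) h₀ := by fun_prop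
      exact this.tendsto.mono_left (nhdsWithin_le_nhds (s := {h₀}ᶜ))
    have hpos : 0 < |(c - h₀) * (h₀ + 1)| := abs_pos.2 (mul_ne_zero he0 h1')
    have f2 : Tendsto (fun h : ℝ => ((c - 2*h - h^2)^2)⁻¹) (nhdsWithin h₀ {h₀}ᶜ) atTop := by
      apply tendsto_inv_nhdsGT_zero.comp
      rw [tendsto_nhdsWithin_iff]
      constructor
      · have hct : ContinuousAt (fun h : ℝ => (c - 2*h - h^2)^2) h₀ := by fun_prop
        have hz : c - 2*h₀ - h₀^2 = 0 := by rw [hc]; ring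
        have := hct.tendsto.mono_left (nhdsWithin_le_nhds (s := {h₀}ᶜ))
        simpa [hz] using this
      · filter_upwards [hevd] with h hd
        exact Set.mem_Ioi.2 (lt_of_le_of_ne (sq_nonneg _) (Ne.symm (pow_ne_zero 2 hd)))
    have hxt : Tendsto (fun h : ℝ => |(c - h) * (h + 1) / (c - 2 * h - h ^ 2) ^ 2|)
        (nhdsWithin h₀ {h₀}ᶜ) atTop := by
      refine (Filter.Tendsto.pos_mul_atTop hpos f1 f2).congr ?_
      intro h
      rw [abs_div, abs_of_nonneg (sq_nonneg (c - 2*h - h^2) : (0:ℝ) ≤ _), div_eq_mul_inv]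
    exact tendsto_atTop_mono
      (fun h => le_trans (le_of_eq (Real.norm_eq_abs _).symm) (norm_fst_le _)) hxt
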